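/- (Convergence of the smoother in the non-stiff limit.) There exist constants c > 0 and μ* > 0 such that for all μ with 0 < μ < μ*, the preconditioner P̂(μ) is invertible and the spectral radius of the smoother iteration matrix satisfies ρ(T_S(μ)) ≤ c · μ^{1/L}. In particular ρ(T_S(μ)) < 1 for μ small enough. -/

import Mathlib

/-!
STATEMENT 2 (Convergence of the smoother in the non-stiff limit): There exist
constants c > 0 and μ* > 0 such that for all 0 < μ < μ*, P̂(μ) is invertible and
ρ(T_S(μ)) ≤ c · μ^(1/L). In particular ρ(T_S(μ)) < 1 for μ small enough.
-/

noncomputable section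

open Matrix
open scoped Kronecker

/-- Complexification of a real matrix. -/
def cmplx {m n : Type*} (A : Matrix m n ℝ) : Matrix m n ℂ := A.map (fun x => (x : ℂ))

/-- The matrix `E` with ones on the first subdiagonal and zeros elsewhere. -/
def Emat (L : ℕ) : Matrix (Fin L) (Fin L) ℂ :=
  Matrix.of fun i j => if (i : ℕ) = (j : ℕ) + 1 then 1 else 0

/-- The matrix `N_M` whose last column consists of ones, all other entries zero. -/
def Nmat (M : ℕ) : Matrix (Fin M) (Fin M) ℂ :=
  Matrix.of fun _ j => if (j : ℕ) = M - 1 then 1 else 0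

/-- `H = N_M ⊗ I_N`. -/
def Hmat (M N : ℕ) : Matrix (Fin M × Fin N) (Fin M × Fin N) ℂ :=
  Nmat M ⊗ₖ (1 : Matrix (Fin N) (Fin N) ℂ)

/-- `E ⊗ H`. -/
def EH (L M N : ℕ) : Matrix (Fin L × Fin M × Fin N) (Fin L × Fin M × Fin N) ℂ :=
  Emat L ⊗ₖ Hmat M N

/-- The composite collocation matrix `C(μ) = I − μ (I_L ⊗ Q ⊗ A) − E ⊗ H`. -/
def Cmat (L : ℕ) {M N : ℕ} (Q : Matrix (Fin M) (Fin M) ℝ) (A : Matrix (Fin N) (Fin N) ℂ)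
    (μ : ℝ) : Matrix (Fin L × Fin M × Fin N) (Fin L × Fin M × Fin N) ℂ :=
  1 - (μ : ℂ) • ((1 : Matrix (Fin L) (Fin L) ℂ) ⊗ₖ (cmplx Q ⊗ₖ A)) - EH L M N

/-- The approximative block Jacobi preconditioner `P̂(μ) = I − μ (I_L ⊗ Q_Δ ⊗ A)`. -/
def Phat (L : ℕ) {M N : ℕ} (QΔ : Matrix (Fin M) (Fin M) ℝ) (A : Matrix (Fin N) (Fin N) ℂ)
    (μ : ℝ) : Matrix (Fin L × Fin M × Fin N) (Fin L × Fin M × Fin N) ℂ :=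
  1 - (μ : ℂ) • ((1 : Matrix (Fin L) (Fin L) ℂ) ⊗ₖ (cmplx QΔ ⊗ₖ A))

/-- The smoother iteration matrix `T_S(μ) = I − P̂(μ)⁻¹ C(μ)`. -/
def Tsmooth (L : ℕ) {M N : ℕ} (Q QΔ : Matrix (Fin M) (Fin M) ℝ)
    (A : Matrix (Fin N) (Fin N) ℂ) (μ : ℝ) :
    Matrix (Fin L × Fin M × Fin N) (Fin L × Fin M × Fin N) ℂ :=
  1 - (Phat L QΔ A μ)⁻¹ * Cmat L Q A μ


open scoped ENNReal NNReal

attribute [local instance] Matrix.linftyOpNormedRing Matrix.linftyOpNormedAlgebra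

lemma Emat_pow_apply (L k : ℕ) (i j : Fin L) :
    (Emat L ^ k) i j = if (i : ℕ) = (j : ℕ) + k then 1 else 0 := by
  induction k generalizing i j with
  | zero => simp [Matrix.one_apply, Fin.ext_iff]
  | succ k ih =>
    rw [pow_succ, Matrix.mul_apply]
    by_cases hj : (j : ℕ) + 1 < L
    · rw [Finset.sum_eq_single (⟨(j : ℕ) + 1, hj⟩ : Fin L)]
      · have hcond : ((i : ℕ) = (j : ℕ) + 1 + k) ↔ ((i : ℕ) = (j : ℕ) + (k + 1)) := by omega
        rw [ih]
        simp [Emat, hcond]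
      · intro b _ hb
        have hbv : (b : ℕ) ≠ (j : ℕ) + 1 := fun h => hb (Fin.ext h)
        simp [Emat, hbv]
      · simp
    · have hi := i.isLt
      rw [if_neg (by omega), Finset.sum_eq_zero]
      intro l _
      have hl := l.isLt
      rw [show Emat L l j = 0 by simp [Emat]; omega, mul_zero]

lemma Emat_pow_self (L : ℕ) : Emat L ^ L = 0 := by
  ext i j
  rw [Emat_pow_apply]
  have := i.isLt
  rw [if_neg (by omega)]
  rfl

lemma kron_pow {m n : Type*} [Fintype m] [Fintype n] [DecidableEq m] [DecidableEq n]
    (X : Matrix m m ℂ) (Y : Matrix n n ℂ) (k : ℕ) : (X ⊗ₖ Y) ^ k = (X ^ k) ⊗ₖ (Y ^ k) := by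
  induction k with
  | zero => simp [Matrix.one_kronecker_one]
  | succ k ih => rw [pow_succ, pow_succ, pow_succ, ih, ← Matrix.mul_kronecker_mul]

lemma pow_sub_pow_norm_le {R : Type*} [NormedRing R] (a b : R) {B : ℝ}
    (ha : ‖a‖ ≤ B) (hb : ‖b‖ ≤ B) (n : ℕ) :
    ‖a ^ (n + 1) - b ^ (n + 1)‖ ≤ (n + 1) * B ^ n * ‖a - b‖ := by
  induction n with
  | zero => simp
  | succ n ih =>
    have hB : 0 ≤ B := le_trans (norm_nonneg a) ha
    have key : a ^ (n + 2) - b ^ (n + 2)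
        = a ^ (n + 1) * (a - b) + (a ^ (n + 1) - b ^ (n + 1)) * b := by
      noncomm_ring
    have h1 : ‖a ^ (n + 1)‖ ≤ B ^ (n + 1) :=
      (norm_pow_le' a n.succ_pos).trans (pow_le_pow_left₀ (norm_nonneg a) ha _)
    calc ‖a ^ (n + 2) - b ^ (n + 2)‖
        ≤ ‖a ^ (n + 1) * (a - b)‖ + ‖(a ^ (n + 1) - b ^ (n + 1)) * b‖ := by
          rw [key]; exact norm_add_le _ _
      _ ≤ ‖a ^ (n + 1)‖ * ‖a - b‖ + ‖a ^ (n + 1) - b ^ (n + 1)‖ * ‖b‖ := by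
          gcongr <;> [exact norm_mul_le _ _; exact norm_mul_le _ _]
      _ ≤ B ^ (n + 1) * ‖a - b‖ + ((n + 1) * B ^ n * ‖a - b‖) * B := by
          gcongr
      _ = ((n + 1 : ℕ) + 1) * B ^ (n + 1) * ‖a - b‖ := by push_cast; ring

set_option maxHeartbeats 2000000 in
theorem stmt_2 (L M N : ℕ) (hL : 0 < L) (hM : 0 < M) (hN : 0 < N)
    (Q QΔ : Matrix (Fin M) (Fin M) ℝ) (A : Matrix (Fin N) (Fin N) ℂ) :
    (∃ c > (0 : ℝ), ∃ μs > (0 : ℝ), ∀ μ : ℝ, 0 < μ → μ < μs →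
      IsUnit (Phat L QΔ A μ) ∧
      spectralRadius ℂ (Tsmooth L Q QΔ A μ) ≤
        ENNReal.ofReal (c * μ ^ ((1 : ℝ) / (L : ℝ))))
    ∧ (∃ μ₀ > (0 : ℝ), ∀ μ : ℝ, 0 < μ → μ < μ₀ →
      IsUnit (Phat L QΔ A μ) ∧
      spectralRadius ℂ (Tsmooth L Q QΔ A μ) < 1) := by
  classical
  haveI : Nonempty (Fin L) := Fin.pos_iff_nonempty.mp hL
  haveI : Nonempty (Fin M) := Fin.pos_iff_nonempty.mp hM
  haveI : Nonempty (Fin N) := Fin.pos_iff_nonempty.mp hN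
  haveI := FiniteDimensional.complete ℂ
      (Matrix (Fin L × Fin M × Fin N) (Fin L × Fin M × Fin N) ℂ)
  set X : Matrix (Fin L × Fin M × Fin N) (Fin L × Fin M × Fin N) ℂ :=
    (1 : Matrix (Fin L) (Fin L) ℂ) ⊗ₖ (cmplx Q ⊗ₖ A) with hXdef
  set Y : Matrix (Fin L × Fin M × Fin N) (Fin L × Fin M × Fin N) ℂ :=
    (1 : Matrix (Fin L) (Fin L) ℂ) ⊗ₖ (cmplx QΔ ⊗ₖ A) with hYdef
  set Z : Matrix (Fin L × Fin M × Fin N) (Fin L × Fin M × Fin N) ℂ := EH L M N with hZdef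
  have hZL : Z ^ L = 0 := by
    rw [hZdef, EH, kron_pow, Emat_pow_self, Matrix.zero_kronecker]
  set K : ℝ := 2 * ‖X - Y‖ + 2 * ‖Y‖ * ‖Z‖ with hKdef
  have hK0 : 0 ≤ K := by
    have := norm_nonneg (X - Y); have := norm_nonneg Y; have := norm_nonneg Z
    rw [hKdef]; positivity
  set B : ℝ := ‖Z‖ + K + 1 with hBdef
  have hB0 : (0 : ℝ) ≤ B := by
    have := norm_nonneg Z; rw [hBdef]; linarith
  set C0 : ℝ := L * B ^ (L - 1) * K + 1 with hC0def
  have hLB : (0 : ℝ) ≤ (L : ℝ) * B ^ (L - 1) :=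
    mul_nonneg (Nat.cast_nonneg _) (pow_nonneg hB0 _)
  have hC0 : 0 < C0 := by rw [hC0def]; nlinarith
  set c : ℝ := C0 ^ ((1 : ℝ) / (L : ℝ)) with hcdef
  have hc0 : 0 < c := Real.rpow_pos_of_pos hC0 _
  set μs : ℝ := min 1 (1 / (2 * (‖Y‖ + 1))) with hμsdef
  have hμs0 : 0 < μs := by
    have := norm_nonneg Y
    rw [hμsdef]; exact lt_min one_pos (by positivity)
  have main : ∀ μ : ℝ, 0 < μ → μ < μs →
      IsUnit (Phat L QΔ A μ) ∧
      spectralRadius ℂ (Tsmooth L Q QΔ A μ) ≤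
        ENNReal.ofReal (c * μ ^ ((1 : ℝ) / (L : ℝ))) := by
    intro μ hμ0 hμlt
    have hμ1 : μ ≤ 1 := le_of_lt (lt_of_lt_of_le hμlt (by rw [hμsdef]; exact min_le_left _ _))
    have hμY : μ * ‖Y‖ < 1 / 2 := by
      have h2 : μ < 1 / (2 * (‖Y‖ + 1)) :=
        lt_of_lt_of_le hμlt (by rw [hμsdef]; exact min_le_right _ _)
      have hY1 : (0 : ℝ) < ‖Y‖ + 1 := by have := norm_nonneg Y; linarith
      rw [lt_div_iff₀ (by linarith)] at h2
      nlinarith [norm_nonneg Y]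
    have hμabs : ‖(μ : ℂ)‖ = μ := by
      rw [Complex.norm_real, Real.norm_eq_abs, abs_of_pos hμ0]
    have hnorm_smulY : ‖(μ : ℂ) • Y‖ < 1 := by
      rw [norm_smul, hμabs]; linarith
    have hPunit : IsUnit (Phat L QΔ A μ) := by
      have := isUnit_one_sub_of_norm_lt_one hnorm_smulY
      rw [Phat, ← hYdef]
      exact this
    refine ⟨hPunit, ?_⟩
    have hdet := (Matrix.isUnit_iff_isUnit_det _).mp hPunit
    set P : Matrix (Fin L × Fin M × Fin N) (Fin L × Fin M × Fin N) ℂ :=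
      Phat L QΔ A μ with hPdef
    set Pi : Matrix (Fin L × Fin M × Fin N) (Fin L × Fin M × Fin N) ℂ := P⁻¹ with hPidef
    have hPinv : Pi * P = 1 := Matrix.nonsing_inv_mul _ hdet
    have hPinv' : P * Pi = 1 := Matrix.mul_nonsing_inv _ hdet
    have hPY : P = 1 - (μ : ℂ) • Y := by rw [hPdef, Phat, ← hYdef]
    have hPi_eq : Pi = 1 + (μ : ℂ) • (Y * Pi) := by
      have h := hPinv'
      rw [hPY, sub_mul, one_mul, Matrix.smul_mul] at h
      exact sub_eq_iff_eq_add.mp h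
    have hone : ‖(1 : Matrix (Fin L × Fin M × Fin N) (Fin L × Fin M × Fin N) ℂ)‖ = 1 :=
      norm_one
    have hPi_norm : ‖Pi‖ ≤ 2 := by
      have h1 : ‖Pi‖ ≤ 1 + μ * (‖Y‖ * ‖Pi‖) := by
        calc ‖Pi‖ = ‖(1 : Matrix (Fin L × Fin M × Fin N) (Fin L × Fin M × Fin N) ℂ)
              + (μ : ℂ) • (Y * Pi)‖ := by rw [← hPi_eq]
          _ ≤ ‖(1 : Matrix (Fin L × Fin M × Fin N) (Fin L × Fin M × Fin N) ℂ)‖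
              + ‖(μ : ℂ) • (Y * Pi)‖ := norm_add_le _ _
          _ ≤ 1 + μ * (‖Y‖ * ‖Pi‖) := by
              rw [hone, norm_smul, hμabs]
              have := norm_mul_le Y Pi
              nlinarith
      nlinarith [norm_nonneg Pi]
    have hPi1 : ‖Pi - 1‖ ≤ 2 * (μ * ‖Y‖) := by
      have heq : Pi - 1 = (μ : ℂ) • (Y * Pi) := by
        conv_lhs => rw [hPi_eq]
        abel
      rw [heq, norm_smul, hμabs]
      nlinarith [mul_le_mul_of_nonneg_left (norm_mul_le Y Pi) hμ0.le,
        mul_le_mul_of_nonneg_left hPi_norm (mul_nonneg hμ0.le (norm_nonneg Y)),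
        norm_nonneg Y, norm_nonneg Pi]
    have hPC : P - Cmat L Q A μ = (μ : ℂ) • (X - Y) + Z := by
      rw [hPY, Cmat, ← hXdef, ← hZdef, smul_sub]
      abel
    have hT : Tsmooth L Q QΔ A μ = Pi * ((μ : ℂ) • (X - Y) + Z) := by
      rw [Tsmooth, ← hPdef, ← hPidef, ← hPC, mul_sub, hPinv]
    have hTZ : ‖Tsmooth L Q QΔ A μ - Z‖ ≤ μ * K := by
      have hsplit : Tsmooth L Q QΔ A μ - Z
          = Pi * ((μ : ℂ) • (X - Y)) + (Pi - 1) * Z := by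
        rw [hT, mul_add, sub_mul, one_mul]; abel
      rw [hsplit]
      have e1 : ‖Pi * ((μ : ℂ) • (X - Y))‖ ≤ 2 * (μ * ‖X - Y‖) := by
        have h := norm_mul_le Pi ((μ : ℂ) • (X - Y))
        rw [norm_smul, hμabs] at h
        nlinarith [mul_le_mul_of_nonneg_right hPi_norm
          (mul_nonneg hμ0.le (norm_nonneg (X - Y))), norm_nonneg (X - Y), norm_nonneg Pi]
      have e2 : ‖(Pi - 1) * Z‖ ≤ 2 * (μ * ‖Y‖) * ‖Z‖ :=
        le_trans (norm_mul_le _ _) (mul_le_mul_of_nonneg_right hPi1 (norm_nonneg Z))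
      calc ‖Pi * ((μ : ℂ) • (X - Y)) + (Pi - 1) * Z‖
          ≤ ‖Pi * ((μ : ℂ) • (X - Y))‖ + ‖(Pi - 1) * Z‖ := norm_add_le _ _
        _ ≤ 2 * (μ * ‖X - Y‖) + 2 * (μ * ‖Y‖) * ‖Z‖ := by linarith
        _ = μ * K := by rw [hKdef]; ring
    have hTB : ‖Tsmooth L Q QΔ A μ‖ ≤ B := by
      have hZT : Z + (Tsmooth L Q QΔ A μ - Z) = Tsmooth L Q QΔ A μ := by abel
      have h := norm_add_le Z (Tsmooth L Q QΔ A μ - Z)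
      rw [hZT] at h
      have : μ * K ≤ K := by nlinarith
      rw [hBdef]; linarith
    have hZB : ‖Z‖ ≤ B := by rw [hBdef]; linarith
    obtain ⟨n, hn⟩ : ∃ n, L = n + 1 := ⟨L - 1, (Nat.succ_pred_eq_of_pos hL).symm⟩
    have hpow := pow_sub_pow_norm_le (Tsmooth L Q QΔ A μ) Z hTB hZB n
    rw [← hn, hZL, sub_zero] at hpow
    have hn1 : ((n : ℝ) + 1) = (L : ℝ) := by rw [hn]; push_cast; ring
    have hn2 : L - 1 = n := by omega
    have hTL : ‖(Tsmooth L Q QΔ A μ) ^ L‖ ≤ C0 * μ := by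
      rw [hn1, ← hn2] at hpow
      have h2 : (L : ℝ) * B ^ (L - 1) * ‖Tsmooth L Q QΔ A μ - Z‖
          ≤ (L : ℝ) * B ^ (L - 1) * (μ * K) :=
        mul_le_mul_of_nonneg_left hTZ hLB
      rw [hC0def]
      nlinarith
    -- spectral radius bound
    have hsr := spectrum.spectralRadius_le_pow_nnnorm_pow_one_div ℂ
      (Tsmooth L Q QΔ A μ) n
    rw [← hn] at hsr
    have hone' : (‖(1 : Matrix (Fin L × Fin M × Fin N) (Fin L × Fin M × Fin N) ℂ)‖₊ : ℝ≥0∞)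
        = 1 := by
      rw [nnnorm_one]; rfl
    rw [hone', ENNReal.one_rpow, mul_one] at hsr
    have hexp : (1 / ((n : ℝ) + 1)) = (1 : ℝ) / (L : ℝ) := by rw [hn1]
    rw [hexp] at hsr
    refine hsr.trans ?_
    have hcoe : (‖(Tsmooth L Q QΔ A μ) ^ L‖₊ : ℝ≥0∞) ≤ ENNReal.ofReal (C0 * μ) := by
      rw [show ((‖(Tsmooth L Q QΔ A μ) ^ L‖₊ : ℝ≥0∞)) = ENNReal.ofReal ‖(Tsmooth L Q QΔ A μ) ^ L‖ from (ofReal_norm _).symm]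
      exact ENNReal.ofReal_le_ofReal hTL
    calc (‖(Tsmooth L Q QΔ A μ) ^ L‖₊ : ℝ≥0∞) ^ ((1 : ℝ) / (L : ℝ))
        ≤ (ENNReal.ofReal (C0 * μ)) ^ ((1 : ℝ) / (L : ℝ)) := by
          exact ENNReal.rpow_le_rpow hcoe (by positivity)
      _ = ENNReal.ofReal ((C0 * μ) ^ ((1 : ℝ) / (L : ℝ))) := by
          rw [← ENNReal.ofReal_rpow_of_pos (by positivity)]
      _ = ENNReal.ofReal (c * μ ^ ((1 : ℝ) / (L : ℝ))) := by
          rw [hcdef, Real.mul_rpow hC0.le hμ0.le]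
  refine ⟨⟨c, hc0, μs, hμs0, main⟩, ?_⟩
  have hc1 : (0 : ℝ) < c + 1 := by linarith
  have hinv1 : (0 : ℝ) < 1 / (c + 1) := by positivity
  refine ⟨min μs ((1 / (c + 1)) ^ L), lt_min hμs0 (pow_pos hinv1 L), ?_⟩
  intro μ hμ0 hμlt
  obtain ⟨hu, hle⟩ := main μ hμ0 (lt_of_lt_of_le hμlt (min_le_left _ _))
  refine ⟨hu, lt_of_le_of_lt hle ?_⟩
  have hμlt2 : μ < (1 / (c + 1)) ^ L := lt_of_lt_of_le hμlt (min_le_right _ _)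
  have h1 : μ ^ ((1 : ℝ) / (L : ℝ)) < ((1 / (c + 1)) ^ L) ^ ((1 : ℝ) / (L : ℝ)) :=
    Real.rpow_lt_rpow hμ0.le hμlt2 (by positivity)
  have hL0 : (L : ℝ) ≠ 0 := by exact_mod_cast hL.ne'
  have h2 : (((1 / (c + 1)) ^ L : ℝ)) ^ ((1 : ℝ) / (L : ℝ)) = 1 / (c + 1) := by
    rw [← Real.rpow_natCast (1 / (c + 1)) L, ← Real.rpow_mul hinv1.le,
      mul_one_div, div_self hL0, Real.rpow_one]
  rw [h2] at h1
  have h3 : c * μ ^ ((1 : ℝ) / (L : ℝ)) < c * (1 / (c + 1)) :=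
    mul_lt_mul_of_pos_left h1 hc0
  have h4 : c * (1 / (c + 1)) < 1 := by
    rw [mul_one_div, div_lt_one hc1]; linarith
  have : c * μ ^ ((1 : ℝ) / (L : ℝ)) < 1 := lt_trans h3 h4
  calc ENNReal.ofReal (c * μ ^ ((1 : ℝ) / (L : ℝ))) < ENNReal.ofReal 1 :=
        ENNReal.ofReal_lt_ofReal_iff one_pos |>.mpr this
    _ = 1 := ENNReal.ofReal_one
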